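/- For α = β = 1/2, the map D : 𝒲 → 𝓕_{1/2} ⊗ 𝓕_{1/2} defined for a fixed a ∈ ℂ and fixed l ∈ ℤ by D(L_n) = a Σ_{i=l+1}^{l+n} (i - n/2) v_i ⊗ w_{n-i} for n ≥ 1, D(L_0) = 0, and D(L_n) = -a Σ_{i=l+n+1}^{l} (i - n/2) v_i ⊗ w_{n-i} for n ≤ -1, equals L_n ↦ L_n · (-a Σ_{i=0}^{l} v_i ⊗ w_{-i}) + a δ_{1/2,1/2}(L_n), where δ_{1/2,1/2} is the cocycle δ_{1-β,β} with β = 1/2; in particular D is a 1-cocycle. -/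

import Mathlib

/-- The action of the Witt basis element `L m` on `𝓕_α ⊗ 𝓕_β`, realized on
`(ℤ × ℤ) →₀ ℂ` with basis `v_i ⊗ w_j ↦ single (i, j) 1`:
`L_m · (v_i ⊗ w_j) = -(i + αm) v_{m+i} ⊗ w_j - (j + βm) v_i ⊗ w_{m+j}`. -/
noncomputable def tact (α β : ℂ) (m : ℤ) : ((ℤ × ℤ) →₀ ℂ) →ₗ[ℂ] ((ℤ × ℤ) →₀ ℂ) :=
  Finsupp.lsum ℂ fun p => LinearMap.toSpanSingleton ℂ ((ℤ × ℤ) →₀ ℂ)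
    ((-((p.1 : ℂ) + α * m)) • Finsupp.single (m + p.1, p.2) (1 : ℂ)
      + (-((p.2 : ℂ) + β * m)) • Finsupp.single (p.1, m + p.2) (1 : ℂ))

/-- A family `d n = d(L_n)` is a 1-cocycle of the Witt algebra with
coefficients in `𝓕_α ⊗ 𝓕_β`: `d([L_m, L_n]) = L_m · d(L_n) - L_n · d(L_m)`. -/
def IsCocycle (α β : ℂ) (d : ℤ → ((ℤ × ℤ) →₀ ℂ)) : Prop :=
  ∀ m n : ℤ, ((m - n : ℤ) : ℂ) • d (m + n) = tact α β m (d n) - tact α β n (d m)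

/-- `d` is a 1-coboundary: `d(L_n) = L_n · u` for a fixed `u` in the module. -/
def IsCoboundary (α β : ℂ) (d : ℤ → ((ℤ × ℤ) →₀ ℂ)) : Prop :=
  ∃ u : (ℤ × ℤ) →₀ ℂ, ∀ n : ℤ, d n = tact α β n u

/-- The map `δ_{1-β,β} : 𝒲 → 𝓕_{1-β} ⊗ 𝓕_β`; for `β = 1/2` this is `δ_{1/2,1/2}`. -/
noncomputable def deltaβ (β : ℂ) (n : ℤ) : (ℤ × ℤ) →₀ ℂ :=
  if 1 ≤ n then
    ∑ i ∈ Finset.Icc (0 : ℤ) (n - 1), ((i : ℂ) - n * β) • Finsupp.single (i, n - i) (1 : ℂ)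
  else if n = 0 then 0
  else - ∑ i ∈ Finset.Icc n (-1 : ℤ), ((i : ℂ) - n * β) • Finsupp.single (i, n - i) (1 : ℂ)

/-- The map `D : 𝒲 → 𝓕_{1/2} ⊗ 𝓕_{1/2}` of Statement 19, depending on
`a ∈ ℂ` and `l ∈ ℤ`. -/
noncomputable def D19 (a : ℂ) (l : ℤ) (n : ℤ) : (ℤ × ℤ) →₀ ℂ :=
  if 1 ≤ n then
    a • ∑ i ∈ Finset.Icc (l + 1) (l + n),
      ((i : ℂ) - (n : ℂ) / 2) • Finsupp.single (i, n - i) (1 : ℂ)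
  else if n = 0 then 0
  else
    -a • ∑ i ∈ Finset.Icc (l + n + 1) l,
      ((i : ℂ) - (n : ℂ) / 2) • Finsupp.single (i, n - i) (1 : ℂ)


section Aux

private lemma sumIcc_apply (A B : ℤ) (c : ℤ → ℂ) (n p q : ℤ) :
    (∑ i ∈ Finset.Icc A B, c i • Finsupp.single (i, n - i) (1 : ℂ)) (p, q)
      = if p + q = n ∧ A ≤ p ∧ p ≤ B then c p else 0 := by
  classical
  rw [Finsupp.finset_sum_apply]
  rw [Finset.sum_congr rfl
    (g := fun i => if i = p then (if p + q = n then c p else 0) else 0) ?_]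
  · rw [Finset.sum_ite_eq']
    simp only [Finset.mem_Icc]
    split_ifs <;> first | rfl | omega
  · intro i _
    simp only [Finsupp.smul_apply, Finsupp.single_apply, smul_eq_mul, Prod.mk.injEq]
    split_ifs with h1 h2 h3
    · rw [h1.1]; ring
    · omega
    · omega
    · omega
    · ring
    · ring

private lemma tact_apply (α β : ℂ) (m : ℤ) (x : (ℤ × ℤ) →₀ ℂ) (p q : ℤ) :
    tact α β m x (p, q)
      = (-(((p - m : ℤ) : ℂ) + α * m)) * x (p - m, q)
        + (-(((q - m : ℤ) : ℂ) + β * m)) * x (p, q - m) := by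
  classical
  induction x using Finsupp.induction_linear with
  | zero => simp
  | add f g hf hg =>
      simp only [map_add, Finsupp.add_apply] at hf hg ⊢
      rw [hf, hg]; ring
  | single u b =>
      obtain ⟨i, j⟩ := u
      rw [tact, Finsupp.lsum_single, LinearMap.toSpanSingleton_apply]
      simp only [Finsupp.smul_apply, Finsupp.add_apply, Finsupp.single_apply,
        smul_eq_mul, Prod.mk.injEq, mul_ite, mul_one, mul_zero]
      split_ifs <;>
        first
          | omega
          | ((repeat' (casesm* _ ∧ _)); subst_vars;
             first
               | (push_cast; ring1)
               | ((have hm0 : m = 0 := by omega); subst hm0; push_cast; ring1))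

private lemma D19_apply (a : ℂ) (l n p q : ℤ) :
    D19 a l n (p, q) = if p + q = n then
      a * ((p : ℂ) - (n : ℂ) / 2) * ((if p ≤ l + n then (1 : ℂ) else 0) - (if p ≤ l then 1 else 0))
    else 0 := by
  unfold D19
  rcases lt_trichotomy n 0 with hn | rfl | hn
  · rw [if_neg (by omega), if_neg (by omega), Finsupp.smul_apply, sumIcc_apply]
    simp only [smul_eq_mul]
    split_ifs <;> first | (push_cast; ring1) | omega
  · rw [if_neg (by omega), if_pos rfl]
    simp only [Finsupp.coe_zero, Pi.zero_apply]
    split_ifs <;> first | (push_cast; ring1) | omega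
  · rw [if_pos (by omega), Finsupp.smul_apply, sumIcc_apply]
    simp only [smul_eq_mul]
    split_ifs <;> first | (push_cast; ring1) | omega

private lemma delta_apply (n p q : ℤ) :
    deltaβ (1/2) n (p, q) = if p + q = n then
      ((p : ℂ) - (n : ℂ) * (1/2)) * ((if p ≤ n - 1 then (1 : ℂ) else 0) - (if p ≤ -1 then 1 else 0))
    else 0 := by
  unfold deltaβ
  rcases lt_trichotomy n 0 with hn | rfl | hn
  · rw [if_neg (by omega), if_neg (by omega), Finsupp.neg_apply, sumIcc_apply]
    split_ifs <;> first | (push_cast; ring1) | omega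
  · rw [if_neg (by omega), if_pos rfl]
    simp only [Finsupp.coe_zero, Pi.zero_apply]
    split_ifs <;> first | (push_cast; ring1) | omega
  · rw [if_pos (by omega), sumIcc_apply]
    split_ifs <;> first | (push_cast; ring1) | omega

private lemma U_apply (l p q : ℤ) :
    (∑ i ∈ Finset.Icc (0 : ℤ) l, Finsupp.single (i, -i) (1 : ℂ)) (p, q)
      = if p + q = 0 ∧ 0 ≤ p ∧ p ≤ l then 1 else 0 := by
  have h := sumIcc_apply 0 l (fun _ => 1) 0 p q
  simpa [zero_sub] using h

end Aux

/-- for `α = β = 1/2`, the map `D = D19 a l` (with `l ≥ 0`, as in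
the paper where `l` is a maximum of absolute values of indices) satisfies
`D(L_n) = L_n · (-a Σ_{i=0}^{l} v_i ⊗ w_{-i}) + a δ_{1/2,1/2}(L_n)`;
in particular `D` is a 1-cocycle. -/
theorem D19_eq_coboundary_add_delta (a : ℂ) (l : ℤ) (hl : 0 ≤ l) :
    (∀ n : ℤ,
      D19 a l n
        = tact (1/2) (1/2) n
            ((-a) • ∑ i ∈ Finset.Icc (0 : ℤ) l, Finsupp.single (i, -i) (1 : ℂ))
          + a • deltaβ (1/2) n) ∧
    IsCocycle (1/2) (1/2) (D19 a l) := by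
  constructor
  · intro n
    ext ⟨p, q⟩
    rw [Finsupp.add_apply, Finsupp.smul_apply, D19_apply, delta_apply, tact_apply]
    simp only [Finsupp.smul_apply, U_apply, smul_eq_mul]
    by_cases hq : p + q = n
    · obtain rfl : q = n - p := by omega
      split_ifs <;> first | omega | (push_cast; ring1)
    · rw [if_neg hq, if_neg hq, if_neg (by omega : ¬(p - n + q = 0 ∧ 0 ≤ p - n ∧ p - n ≤ l)),
        if_neg (by omega : ¬(p + (q - n) = 0 ∧ 0 ≤ p ∧ p ≤ l))]
      ring
  · intro m n
    ext ⟨p, q⟩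
    rw [Finsupp.smul_apply, Finsupp.sub_apply, tact_apply, tact_apply]
    simp only [D19_apply, smul_eq_mul]
    by_cases hq : p + q = m + n
    · obtain rfl : q = m + n - p := by omega
      rw [if_pos (by omega : p + (m + n - p) = m + n),
        if_pos (by omega : p - m + (m + n - p) = n),
        if_pos (by omega : p + (m + n - p - m) = n),
        if_pos (by omega : p - n + (m + n - p) = m),
        if_pos (by omega : p + (m + n - p - n) = m)]
      split_ifs <;> first | omega | (push_cast; ring1)
    · rw [if_neg (by omega : ¬(p + q = m + n)),
        if_neg (by omega : ¬(p - m + q = n)),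
        if_neg (by omega : ¬(p + (q - m) = n)),
        if_neg (by omega : ¬(p - n + q = m)),
        if_neg (by omega : ¬(p + (q - n) = m))]
      ring
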